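/- arXiv:1709.03026 — 3 statements merged into one kernel-verified Lean document; each statement's English description precedes it below -/
import Mathlib

section
/- Suppose P ≻ 0 and C are n×n real matrices satisfying the algebraic Riccati equation A P + P Aᵀ − P Cᵀ C P + B Bᵀ = 0, and suppose (A,B) is controllable (i.e., for every eigenvalue λ of Aᵀ with eigenvector x, Bᵀ x ≠ 0). Then every eigenvalue of A − P Cᵀ C has strictly negative real part. -/
set_option maxHeartbeats 1000000

open Matrix
open scoped ComplexOrder
open scoped MatrixOrder

lemma mapRC_conjT {n : ℕ} (M : Matrix (Fin n) (Fin n) ℝ) :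
    (M.map Complex.ofReal)ᴴ = Mᵀ.map Complex.ofReal := by
  ext i j
  simp [Matrix.conjTranspose_apply, Complex.conj_ofReal]

lemma mapRC_mul {n : ℕ} (M N : Matrix (Fin n) (Fin n) ℝ) :
    (M * N).map Complex.ofReal = M.map Complex.ofReal * N.map Complex.ofReal :=
  Matrix.map_mul (f := Complex.ofRealHom)

lemma mapRC_add {n : ℕ} (M N : Matrix (Fin n) (Fin n) ℝ) :
    (M + N).map Complex.ofReal = M.map Complex.ofReal + N.map Complex.ofReal := by
  ext i j; simp

lemma mapRC_sub {n : ℕ} (M N : Matrix (Fin n) (Fin n) ℝ) :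
    (M - N).map Complex.ofReal = M.map Complex.ofReal - N.map Complex.ofReal := by
  ext i j; simp

lemma mapRC_one {n : ℕ} :
    (1 : Matrix (Fin n) (Fin n) ℝ).map Complex.ofReal = 1 := by
  ext i j
  by_cases h : i = j <;> simp [Matrix.one_apply, h]

lemma mapRC_neg {n : ℕ} (M : Matrix (Fin n) (Fin n) ℝ) :
    (-M).map Complex.ofReal = -(M.map Complex.ofReal) := by
  ext i j; simp

/-- `star a ⬝ᵥ (M'ᵀ *ᵥ b) = star (M' *ᵥ a) ⬝ᵥ b` for real `M`, complex `a b`. -/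
lemma star_dot' {n : ℕ} (M : Matrix (Fin n) (Fin n) ℝ) (a b : Fin n → ℂ) :
    star a ⬝ᵥ ((M.map Complex.ofReal)ᵀ *ᵥ b) = star ((M.map Complex.ofReal) *ᵥ a) ⬝ᵥ b := by
  rw [show (M.map Complex.ofReal)ᵀ = (M.map Complex.ofReal)ᴴ from by
      rw [mapRC_conjT, Matrix.transpose_map],
    Matrix.dotProduct_mulVec, Matrix.star_mulVec]

theorem stmt_2 {n : ℕ}
    (A B C P : Matrix (Fin n) (Fin n) ℝ)
    (hP : P.PosDef)
    (hric : A * P + P * Aᵀ - P * Cᵀ * C * P + B * Bᵀ = 0)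
    (hctrb : ∀ (lam : ℂ) (x : Fin n → ℂ), x ≠ 0 →
      (Aᵀ.map Complex.ofReal).mulVec x = lam • x →
      (Bᵀ.map Complex.ofReal).mulVec x ≠ 0) :
    ∀ (mu : ℂ) (x : Fin n → ℂ), x ≠ 0 →
      (((A - P * Cᵀ * C).map Complex.ofReal)).mulVec x = mu • x → mu.re < 0 := by
  intro mu x hx hmu
  by_contra hcon
  push_neg at hcon
  -- real preliminaries
  set Q : Matrix (Fin n) (Fin n) ℝ := P⁻¹ with hQdef
  set F : Matrix (Fin n) (Fin n) ℝ := A - P * Cᵀ * C with hFdef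
  have hdet : IsUnit P.det := hP.det_pos.ne'.isUnit
  have hPQ : P * Q = 1 := Matrix.mul_nonsing_inv P hdet
  have hQP : Q * P = 1 := Matrix.nonsing_inv_mul P hdet
  have hPsym : Pᵀ = P := hP.1
  have hQsym : Qᵀ = Q := by rw [hQdef, Matrix.transpose_nonsing_inv, hPsym]
  have hQpd : Q.PosDef := hP.inv
  set G : Matrix (Fin n) (Fin n) ℝ := Bᵀ * Q with hGdef
  -- square root of Q
  set S : Matrix (Fin n) (Fin n) ℝ := CFC.sqrt Q with hSdef
  have hSS : S * S = Q := CFC.sqrt_mul_sqrt_self Q hQpd.posSemidef.nonneg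
  have hSsym : Sᵀ = S := by
    ext i j
    have := congrFun (congrFun (CFC.sqrt_nonneg Q).posSemidef.1 i) j
    simpa [Matrix.conjTranspose_apply] using this
  -- rearranged Riccati equation
  have h1 : A * P + P * Aᵀ = P * Cᵀ * C * P - B * Bᵀ := by
    have h := hric
    rw [sub_add, sub_eq_zero] at h
    exact h
  -- key identity : Q A + Aᵀ Q = Cᵀ C - Gᵀ G
  have key : Q * A + Aᵀ * Q = Cᵀ * C - Gᵀ * G := by
    have e2 : Q * (A * P + P * Aᵀ) * Q = Q * A + Aᵀ * Q := by
      rw [mul_add, add_mul,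
        show Q * (A * P) * Q = Q * A * (P * Q) from by noncomm_ring,
        show Q * (P * Aᵀ) * Q = (Q * P) * (Aᵀ * Q) from by noncomm_ring,
        hPQ, hQP, mul_one, one_mul]
    have e3 : Q * (P * Cᵀ * C * P - B * Bᵀ) * Q = Cᵀ * C - Gᵀ * G := by
      rw [mul_sub, sub_mul,
        show Q * (P * Cᵀ * C * P) * Q = (Q * P) * (Cᵀ * C) * (P * Q) from by noncomm_ring,
        hPQ, hQP, mul_one, one_mul,
        show Gᵀ * G = Q * (B * Bᵀ) * Q from by
          rw [hGdef, Matrix.transpose_mul, hQsym, Matrix.transpose_transpose]; noncomm_ring]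
    rw [← e2, h1, e3]
  -- Lyapunov identity for F
  have keyF : Q * F + Fᵀ * Q = -(Cᵀ * C) - Gᵀ * G := by
    have hFt : Fᵀ = Aᵀ - Cᵀ * C * P := by
      rw [hFdef, Matrix.transpose_sub, Matrix.transpose_mul, Matrix.transpose_mul,
        Matrix.transpose_transpose, hPsym]
      noncomm_ring
    rw [hFt, hFdef, mul_sub, sub_mul,
      show Q * (P * Cᵀ * C) = (Q * P) * (Cᵀ * C) from by noncomm_ring,
      show Cᵀ * C * P * Q = (Cᵀ * C) * (P * Q) from by noncomm_ring, hQP, hPQ, one_mul, mul_one,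
      sub_add_sub_comm, key]
    abel
  -- complexification
  have key' : Q.map Complex.ofReal * A.map Complex.ofReal
      + (A.map Complex.ofReal)ᵀ * Q.map Complex.ofReal
      = (C.map Complex.ofReal)ᵀ * C.map Complex.ofReal
      - (G.map Complex.ofReal)ᵀ * G.map Complex.ofReal := by
    have := congrArg (fun M : Matrix (Fin n) (Fin n) ℝ => M.map Complex.ofReal) key
    simpa only [mapRC_add, mapRC_sub, mapRC_mul, mapRC_neg, Matrix.transpose_map] using this
  have keyF' : Q.map Complex.ofReal * F.map Complex.ofReal
      + (F.map Complex.ofReal)ᵀ * Q.map Complex.ofReal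
      = -((C.map Complex.ofReal)ᵀ * C.map Complex.ofReal)
      - (G.map Complex.ofReal)ᵀ * G.map Complex.ofReal := by
    have := congrArg (fun M : Matrix (Fin n) (Fin n) ℝ => M.map Complex.ofReal) keyF
    simpa only [mapRC_add, mapRC_sub, mapRC_mul, mapRC_neg, Matrix.transpose_map] using this
  have hQ'SS : Q.map Complex.ofReal = S.map Complex.ofReal * S.map Complex.ofReal := by
    have h := congrArg (fun M : Matrix (Fin n) (Fin n) ℝ => M.map Complex.ofReal) hSS
    simp only [mapRC_mul] at h
    exact h.symm
  have hPQ' : P.map Complex.ofReal * Q.map Complex.ofReal = 1 := by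
    have h := congrArg (fun M : Matrix (Fin n) (Fin n) ℝ => M.map Complex.ofReal) hPQ
    simp only [mapRC_mul, mapRC_one] at h
    exact h
  have hS'sym : (S.map Complex.ofReal)ᵀ = S.map Complex.ofReal := by
    rw [← Matrix.transpose_map, hSsym]
  -- vectors
  set y : Fin n → ℂ := (Q.map Complex.ofReal) *ᵥ x with hydef
  set u : Fin n → ℂ := (C.map Complex.ofReal) *ᵥ x with hudef
  set w : Fin n → ℂ := (G.map Complex.ofReal) *ᵥ x with hwdef
  set v : Fin n → ℂ := (S.map Complex.ofReal) *ᵥ x with hvdef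
  set q : ℂ := star x ⬝ᵥ y with hqdef
  have hwy : w = (Bᵀ.map Complex.ofReal) *ᵥ y := by
    rw [hwdef, hydef, hGdef, mapRC_mul, Matrix.mulVec_mulVec]
  have hy0 : y ≠ 0 := by
    intro h
    apply hx
    have hxPy : x = (P.map Complex.ofReal) *ᵥ y := by
      rw [hydef, Matrix.mulVec_mulVec, hPQ', Matrix.one_mulVec]
    rw [hxPy, h, Matrix.mulVec_zero]
  have hv0 : v ≠ 0 := by
    intro h
    apply hy0
    rw [hydef, hQ'SS, ← Matrix.mulVec_mulVec, ← hvdef, h, Matrix.mulVec_zero]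
  -- q = ⟪v, v⟫ > 0
  have hqv : q = star v ⬝ᵥ v := by
    rw [hqdef, hydef, hQ'SS, ← Matrix.mulVec_mulVec]
    conv_lhs => rw [← hvdef, ← hS'sym]
    rw [star_dot', ← hvdef]
  have hqpos : (0 : ℂ) < q := by
    rw [hqv]; exact Matrix.dotProduct_star_self_pos_iff.2 hv0
  -- main energy identity
  have lhs_eq : star x ⬝ᵥ ((Q.map Complex.ofReal * F.map Complex.ofReal
      + (F.map Complex.ofReal)ᵀ * Q.map Complex.ofReal) *ᵥ x)
      = mu * q + star mu * q := by
    rw [Matrix.add_mulVec, dotProduct_add]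
    congr 1
    · rw [← Matrix.mulVec_mulVec, hmu, Matrix.mulVec_smul, dotProduct_smul,
        smul_eq_mul, ← hydef, ← hqdef]
    · rw [← Matrix.mulVec_mulVec, ← hydef, star_dot', hmu, star_smul,
        smul_dotProduct, smul_eq_mul, ← hqdef]
  have rhs_eq : star x ⬝ᵥ ((-((C.map Complex.ofReal)ᵀ * C.map Complex.ofReal)
      - (G.map Complex.ofReal)ᵀ * G.map Complex.ofReal) *ᵥ x)
      = -(star u ⬝ᵥ u) - star w ⬝ᵥ w := by
    rw [Matrix.sub_mulVec, dotProduct_sub, Matrix.neg_mulVec, dotProduct_neg,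
      ← Matrix.mulVec_mulVec, ← Matrix.mulVec_mulVec, ← hudef, ← hwdef,
      star_dot', star_dot', ← hudef, ← hwdef]
  have main : mu * q + star mu * q = -(star u ⬝ᵥ u) - star w ⬝ᵥ w := by
    rw [← lhs_eq, ← rhs_eq, keyF']
  -- take real parts
  have hqre : 0 < q.re := (Complex.lt_def.mp hqpos).1
  have hau : (0 : ℂ) ≤ star u ⬝ᵥ u := dotProduct_star_self_nonneg u
  have haw : (0 : ℂ) ≤ star w ⬝ᵥ w := dotProduct_star_self_nonneg w
  have hauRe : 0 ≤ (star u ⬝ᵥ u).re := (Complex.le_def.mp hau).1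
  have hawRe : 0 ≤ (star w ⬝ᵥ w).re := (Complex.le_def.mp haw).1
  have hauIm : (star u ⬝ᵥ u).im = 0 := ((Complex.le_def.mp hau).2).symm
  have hawIm : (star w ⬝ᵥ w).im = 0 := ((Complex.le_def.mp haw).2).symm
  have mainRe : 2 * mu.re * q.re = -(star u ⬝ᵥ u).re - (star w ⬝ᵥ w).re := by
    have h2 : mu * q + star mu * q = ((2 * mu.re : ℝ) : ℂ) * q := by
      rw [← add_mul, Complex.star_def, Complex.add_conj]
    rw [h2] at main
    have := congrArg Complex.re main
    simpa [Complex.sub_re, Complex.neg_re] using this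
  -- mu.re = 0 and u = w = 0
  have hure : (star u ⬝ᵥ u).re = 0 := by nlinarith
  have hwre : (star w ⬝ᵥ w).re = 0 := by nlinarith
  have hu : u = 0 := by
    apply dotProduct_star_self_eq_zero.mp
    exact Complex.ext hure hauIm
  have hw : w = 0 := by
    apply dotProduct_star_self_eq_zero.mp
    exact Complex.ext hwre hawIm
  -- A x = mu x
  have hAx : (A.map Complex.ofReal) *ᵥ x = mu • x := by
    have hF' : F.map Complex.ofReal
        = A.map Complex.ofReal - (P * Cᵀ * C).map Complex.ofReal := by
      rw [hFdef, mapRC_sub]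
    have hPCC : ((P * Cᵀ * C).map Complex.ofReal) *ᵥ x = 0 := by
      rw [mapRC_mul, ← Matrix.mulVec_mulVec, ← hudef, hu, Matrix.mulVec_zero]
    have := hmu
    rw [hF', Matrix.sub_mulVec, hPCC, sub_zero] at this
    exact this
  -- Aᵀ y = (-mu) y
  have hAty : (Aᵀ.map Complex.ofReal) *ᵥ y = (-mu) • y := by
    have happ := congrArg (fun M : Matrix (Fin n) (Fin n) ℂ => M *ᵥ x) key'
    simp only [Matrix.add_mulVec, Matrix.sub_mulVec] at happ
    have e1 : (Q.map Complex.ofReal * A.map Complex.ofReal) *ᵥ x = mu • y := by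
      rw [← Matrix.mulVec_mulVec, hAx, Matrix.mulVec_smul, ← hydef]
    have e2 : ((C.map Complex.ofReal)ᵀ * C.map Complex.ofReal) *ᵥ x = 0 := by
      rw [← Matrix.mulVec_mulVec, ← hudef, hu, Matrix.mulVec_zero]
    have e3 : ((G.map Complex.ofReal)ᵀ * G.map Complex.ofReal) *ᵥ x = 0 := by
      rw [← Matrix.mulVec_mulVec, ← hwdef, hw, Matrix.mulVec_zero]
    have e4 : ((A.map Complex.ofReal)ᵀ * Q.map Complex.ofReal) *ᵥ x
        = (Aᵀ.map Complex.ofReal) *ᵥ y := by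
      rw [← Matrix.mulVec_mulVec, ← hydef, Matrix.transpose_map]
    rw [e1, e2, e3, e4] at happ
    have h5 : (Aᵀ.map Complex.ofReal) *ᵥ y = -(mu • y) :=
      eq_neg_of_add_eq_zero_right (by rw [happ]; simp)
    rw [h5, neg_smul]
  exact hctrb (-mu) y hy0 hAty (by rw [← hwy]; exact hw)
end

section
/- If (A − P Cᵀ C)P + P(A − P Cᵀ C)ᵀ + P Cᵀ C P + B Bᵀ = 0 with P ≻ 0, and x is a complex eigenvector of (A − P Cᵀ C)ᵀ = Aᵀ − Cᵀ C P with eigenvalue λ satisfying Re(λ) ≥ 0, then C P x = 0 and Bᵀ x = 0, and hence Aᵀ x = λ x. -/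
open Matrix Complex

namespace Stmt3Aux

variable {n : ℕ}

/-- entrywise complexification of a real matrix -/
def cm (M : Matrix (Fin n) (Fin n) ℝ) : Matrix (Fin n) (Fin n) ℂ :=
  M.map Complex.ofReal

lemma cm_add (M N : Matrix (Fin n) (Fin n) ℝ) : cm (M + N) = cm M + cm N :=
  map_add (Complex.ofRealHom.mapMatrix (m := Fin n)) M N

lemma cm_mul (M N : Matrix (Fin n) (Fin n) ℝ) : cm (M * N) = cm M * cm N :=
  _root_.map_mul (Complex.ofRealHom.mapMatrix (m := Fin n)) M N

lemma cm_transpose (M : Matrix (Fin n) (Fin n) ℝ) : cm (Mᵀ) = (cm M)ᵀ := rfl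

lemma cm_conjTranspose (M : Matrix (Fin n) (Fin n) ℝ) : (cm M)ᴴ = cm (Mᵀ) := by
  ext i j
  simp [cm, Matrix.conjTranspose_apply, Matrix.map_apply]

lemma star_self_dot (v : Fin n → ℂ) :
    star v ⬝ᵥ v = ((∑ i, Complex.normSq (v i) : ℝ) : ℂ) := by
  simp only [dotProduct, Pi.star_apply, Complex.ofReal_sum]
  refine Finset.sum_congr rfl fun i _ => ?_
  rw [Complex.normSq_eq_conj_mul_self]
  rfl

end Stmt3Aux

open Stmt3Aux in
theorem stmt_3 {n : ℕ}
    (A B C P : Matrix (Fin n) (Fin n) ℝ)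
    (hP : P.PosDef)
    (hlyap : (A - P * Cᵀ * C) * P + P * (A - P * Cᵀ * C)ᵀ
        + P * Cᵀ * C * P + B * Bᵀ = 0)
    (lam : ℂ) (hlam : 0 ≤ lam.re)
    (x : Fin n → ℂ) (hx : x ≠ 0)
    (heig : ((Aᵀ - Cᵀ * C * P).map Complex.ofReal).mulVec x = lam • x) :
    ((C * P).map Complex.ofReal).mulVec x = 0 ∧
    (Bᵀ.map Complex.ofReal).mulVec x = 0 ∧
    (Aᵀ.map Complex.ofReal).mulVec x = lam • x := by
  have hPsymm : Pᵀ = P := hP.isHermitian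
  set w : Fin n → ℂ := (cm (C * P)).mulVec x with hw
  set z : Fin n → ℂ := (cm Bᵀ).mulVec x with hz
  have heig' : (cm (Aᵀ - Cᵀ * C * P)).mulVec x = lam • x := heig
  have hTr : (A - P * Cᵀ * C)ᵀ = Aᵀ - Cᵀ * C * P := by
    rw [Matrix.transpose_sub, Matrix.transpose_mul, Matrix.transpose_mul,
      Matrix.transpose_transpose, hPsymm, Matrix.mul_assoc]
  -- P = Mᴴ M with M invertible
  obtain ⟨M, hM⟩ : ∃ M : Matrix (Fin n) (Fin n) ℝ, P = Mᴴ * M := by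
    open scoped MatrixOrder Matrix.Norms.L2Operator in
    obtain ⟨B', hB'⟩ := CStarAlgebra.nonneg_iff_eq_star_mul_self.mp hP.posSemidef.nonneg
    exact ⟨B', hB'⟩
  have hMdet : M.det ≠ 0 := by
    intro h
    have : P.det = 0 := by rw [hM, Matrix.det_mul, h, mul_zero]
    exact (hP.det_pos).ne' this
  set y : Fin n → ℂ := (cm M).mulVec x with hy
  have hyne : y ≠ 0 := by
    intro h
    apply hx
    have hdet : (cm M).det ≠ 0 := by
      have : (cm M).det = (M.det : ℂ) := by
        rw [show cm M = Complex.ofRealHom.mapMatrix M from rfl, ← RingHom.map_det]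
        rfl
      rw [this]
      exact_mod_cast hMdet
    have hinj := Matrix.mulVec_injective_iff_isUnit.mpr
      ((Matrix.isUnit_iff_isUnit_det _).mpr (isUnit_iff_ne_zero.mpr hdet))
    have h2 := @hinj x 0
    simp only [Matrix.mulVec_zero] at h2
    exact h2 h
  have hMH : Mᴴ = Mᵀ := rfl
  have hPc : cm P = (cm M)ᴴ * cm M := by
    rw [hM, hMH, cm_mul, cm_conjTranspose]
  have hq : star x ⬝ᵥ (cm P).mulVec x = ((∑ i, Complex.normSq (y i) : ℝ) : ℂ) := by
    rw [hPc, ← Matrix.mulVec_mulVec, Matrix.dotProduct_mulVec, ← Matrix.star_mulVec,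
      ← hy, star_self_dot]
  set r : ℝ := ∑ i, Complex.normSq (y i) with hr
  have hrpos : 0 < r := by
    rcases Function.ne_iff.mp hyne with ⟨i, hi⟩
    exact Finset.sum_pos' (fun j _ => Complex.normSq_nonneg _)
      ⟨i, Finset.mem_univ i, Complex.normSq_pos.mpr hi⟩
  set sw : ℝ := ∑ i, Complex.normSq (w i) with hsw
  set sz : ℝ := ∑ i, Complex.normSq (z i) with hsz
  have hswnn : 0 ≤ sw := Finset.sum_nonneg fun i _ => Complex.normSq_nonneg _
  have hsznn : 0 ≤ sz := Finset.sum_nonneg fun i _ => Complex.normSq_nonneg _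
  -- main identity
  have key : (0 : ℂ) = (starRingEnd ℂ) lam * r + lam * r + (sw : ℂ) + (sz : ℂ) := by
    have h0 : star x ⬝ᵥ (cm ((A - P * Cᵀ * C) * P + P * (A - P * Cᵀ * C)ᵀ
        + P * Cᵀ * C * P + B * Bᵀ)).mulVec x = 0 := by
      rw [hlyap]
      simp [cm]
    have hsplit : cm ((A - P * Cᵀ * C) * P + P * (A - P * Cᵀ * C)ᵀ
        + P * Cᵀ * C * P + B * Bᵀ)
        = cm (A - P * Cᵀ * C) * cm P + cm P * cm ((A - P * Cᵀ * C)ᵀ)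
        + cm P * cm Cᵀ * cm C * cm P + cm B * cm Bᵀ := by
      simp only [cm_add, cm_mul]
    rw [hsplit] at h0
    have t1 : star x ⬝ᵥ (cm (A - P * Cᵀ * C) * cm P).mulVec x
        = (starRingEnd ℂ) lam * r := by
      have hF : cm (A - P * Cᵀ * C) = (cm ((A - P * Cᵀ * C)ᵀ))ᴴ := by
        rw [cm_conjTranspose, Matrix.transpose_transpose]
      rw [hF, ← Matrix.mulVec_mulVec, Matrix.dotProduct_mulVec, ← Matrix.star_mulVec,
        hTr, heig', star_smul, smul_dotProduct, hq]
      rfl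
    have t2 : star x ⬝ᵥ (cm P * cm ((A - P * Cᵀ * C)ᵀ)).mulVec x = lam * r := by
      rw [← Matrix.mulVec_mulVec, hTr, heig', Matrix.mulVec_smul, dotProduct_smul,
        hq]
      rfl
    have hfac : P * Cᵀ * C * P = (C * P)ᵀ * (C * P) := by
      rw [Matrix.transpose_mul, hPsymm]
      noncomm_ring
    have t3 : star x ⬝ᵥ (cm P * cm Cᵀ * cm C * cm P).mulVec x = (sw : ℂ) := by
      rw [show cm P * cm Cᵀ * cm C * cm P = cm (P * Cᵀ * C * P) by simp only [cm_mul],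
        hfac, cm_mul, ← cm_conjTranspose, ← Matrix.mulVec_mulVec,
        Matrix.dotProduct_mulVec, ← Matrix.star_mulVec, ← hw, star_self_dot]
    have t4 : star x ⬝ᵥ (cm B * cm Bᵀ).mulVec x = (sz : ℂ) := by
      have hB : cm B = (cm Bᵀ)ᴴ := by rw [cm_conjTranspose, Matrix.transpose_transpose]
      rw [hB, ← Matrix.mulVec_mulVec, Matrix.dotProduct_mulVec, ← Matrix.star_mulVec,
        ← hz, star_self_dot]
    rw [Matrix.add_mulVec, Matrix.add_mulVec, Matrix.add_mulVec, dotProduct_add,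
      dotProduct_add, dotProduct_add, t1, t2, t3, t4] at h0
    exact h0.symm
  have keyre : 0 = lam.re * r + lam.re * r + sw + sz := by
    have := congrArg Complex.re key
    simpa [Complex.add_re, Complex.mul_re, Complex.ofReal_re, Complex.ofReal_im,
      Complex.conj_re, Complex.conj_im] using this
  have hlr : 0 ≤ lam.re * r := mul_nonneg hlam hrpos.le
  have hswz : sw = 0 ∧ sz = 0 := by constructor <;> linarith
  have hw0 : w = 0 := by
    funext i
    have := (Finset.sum_eq_zero_iff_of_nonneg
      (fun j _ => Complex.normSq_nonneg (w j))).mp hswz.1 i (Finset.mem_univ i)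
    simpa [Complex.normSq_eq_zero] using this
  have hz0 : z = 0 := by
    funext i
    have := (Finset.sum_eq_zero_iff_of_nonneg
      (fun j _ => Complex.normSq_nonneg (z j))).mp hswz.2 i (Finset.mem_univ i)
    simpa [Complex.normSq_eq_zero] using this
  refine ⟨hw0, hz0, ?_⟩
  have hA : (Aᵀ : Matrix (Fin n) (Fin n) ℝ) = (Aᵀ - Cᵀ * C * P) + Cᵀ * (C * P) := by
    rw [← Matrix.mul_assoc]
    abel
  have : (cm Aᵀ).mulVec x = lam • x := by
    rw [hA, cm_add, Matrix.add_mulVec, heig', cm_mul, ← Matrix.mulVec_mulVec, ← hw, hw0]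
    simp
  exact this
end

section
/- If P is symmetric positive definite and C satisfies P Cᵀ C P = A P + P Aᵀ + B Bᵀ, then Tr(C P Cᵀ) ≥ 2 Tr(A), i.e., the mutual information rate (1/2)Tr(CPCᵀ) is bounded below by Tr(A) plus the nonnegative quantity (1/2)Tr(Bᵀ P⁻¹ B). -/
open Matrix

lemma posSemidef_trace_nonneg {n : ℕ} {M : Matrix (Fin n) (Fin n) ℝ}
    (h : M.PosSemidef) : 0 ≤ M.trace := by
  rw [Matrix.trace]
  exact Finset.sum_nonneg fun i _ => h.diag_nonneg

theorem stmt_17 {n : ℕ}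
    (A B C P : Matrix (Fin n) (Fin n) ℝ)
    (hP : P.PosDef)
    (hric : P * Cᵀ * C * P = A * P + P * Aᵀ + B * Bᵀ) :
    (1 / 2) * (C * P * Cᵀ).trace
        = A.trace + (1 / 2) * (Bᵀ * P⁻¹ * B).trace
      ∧ 2 * A.trace ≤ (C * P * Cᵀ).trace := by
  have hPinv : P * P⁻¹ = 1 := Matrix.mul_nonsing_inv P (isUnit_iff_ne_zero.mpr hP.det_pos.ne')
  have key : (C * P * Cᵀ).trace = 2 * A.trace + (Bᵀ * P⁻¹ * B).trace := by
    have h1 : (C * P * Cᵀ).trace = ((P * Cᵀ * C * P) * P⁻¹).trace := by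
      have : (P * Cᵀ * C * P) * P⁻¹ = P * Cᵀ * C := by
        rw [mul_assoc, hPinv, mul_one]
      rw [this, trace_mul_cycle, Matrix.trace_mul_comm, ← mul_assoc]
    have h2 : ((A * P + P * Aᵀ + B * Bᵀ) * P⁻¹).trace
        = 2 * A.trace + (Bᵀ * P⁻¹ * B).trace := by
      rw [add_mul, add_mul, trace_add, trace_add]
      rw [mul_assoc A P P⁻¹, hPinv, mul_one]
      have h3 : (P * Aᵀ * P⁻¹).trace = A.trace := by
        rw [trace_mul_cycle, Matrix.nonsing_inv_mul P (isUnit_iff_ne_zero.mpr hP.det_pos.ne'),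
          one_mul, trace_transpose]
      have h4 : (B * Bᵀ * P⁻¹).trace = (Bᵀ * P⁻¹ * B).trace := by
        rw [trace_mul_cycle, trace_mul_cycle]
      rw [h3, h4]; ring
    rw [h1, hric, h2]
  have hpsd : (Bᵀ * P⁻¹ * B).PosSemidef := by
    have := (hP.inv).posSemidef.conjTranspose_mul_mul_same B
    simpa using this
  have htr := posSemidef_trace_nonneg hpsd
  constructor
  · rw [key]; ring
  · rw [key]; linarith
end
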